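/- Let ψ: ℝ → ℂ and h: ℝ → ℝ be integrable functions with ∫_ℝ h(u) du = 1, and suppose the function (s,t,u) ↦ h(u) ψ(s−u) conj(ψ(t−u)) is integrable on ℝ³. Define the kernel K(s,t) = ∫_ℝ h(u) ψ(s−u) conj(ψ(t−u)) du and its double Fourier transform 𝒦(f,f′) = ∫_ℝ ∫_ℝ K(s,t) e^{−i2πfs} e^{−i2πf′t} ds dt. Then for every f ∈ ℝ, 𝒦(f, −f) = |Ψ(f)|², where Ψ(f) = ∫_ℝ ψ(t) e^{−i2πft} dt. -/

import Mathlib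

open MeasureTheory Complex

/-- The Fourier kernel `e^{-i 2 π x}`. -/
noncomputable def fker (x : ℝ) : ℂ := Complex.exp (-2 * Real.pi * x * Complex.I)

lemma fker_add (x y : ℝ) : fker (x + y) = fker x * fker y := by
  rw [fker, fker, fker, ← Complex.exp_add]
  push_cast
  ring_nf

lemma fker_zero : fker 0 = 1 := by simp [fker]

lemma fker_conj (x : ℝ) : starRingEnd ℂ (fker x) = fker (-x) := by
  rw [fker, fker, ← Complex.exp_conj]
  congr 1
  push_cast
  simp only [map_mul, Complex.conj_I, Complex.conj_ofReal, map_neg, map_ofNat]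
  ring

lemma fker_norm (x : ℝ) : ‖fker x‖ = 1 := by
  rw [fker, Complex.norm_exp]
  norm_num [Complex.mul_I_re]

lemma fker_continuous : Continuous fker := by
  unfold fker; fun_prop

theorem stmt_0 (ψ : ℝ → ℂ) (h : ℝ → ℝ)
    (hψ : Integrable ψ) (hh : Integrable h) (hh1 : ∫ u, h u = 1)
    (hint : Integrable (fun p : ℝ × ℝ × ℝ =>
      (h p.2.2 : ℂ) * ψ (p.1 - p.2.2) * starRingEnd ℂ (ψ (p.2.1 - p.2.2))))
    (K : ℝ → ℝ → ℂ)
    (hK : ∀ s t, K s t = ∫ u, (h u : ℂ) * ψ (s - u) * starRingEnd ℂ (ψ (t - u)))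
    (𝒦 : ℝ → ℝ → ℂ)
    (h𝒦 : ∀ f f', 𝒦 f f' = ∫ s, ∫ t, K s t * fker (f * s) * fker (f' * t))
    (Ψ : ℝ → ℂ)
    (hΨ : ∀ f, Ψ f = ∫ t, ψ t * fker (f * t))
    (f : ℝ) :
    𝒦 f (-f) = Complex.normSq (Ψ f) := by
  set F : ℝ × ℝ × ℝ → ℂ := fun p =>
    (h p.2.2 : ℂ) * ψ (p.1 - p.2.2) * starRingEnd ℂ (ψ (p.2.1 - p.2.2))
      * fker (f * p.1) * fker (-f * p.2.1) with hFdef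
  -- integrability of F
  have hF : Integrable F := by
    have hc : Continuous (fun p : ℝ × ℝ × ℝ => fker (f * p.1) * fker (-f * p.2.1)) := by
      apply Continuous.mul
      · exact fker_continuous.comp (by fun_prop)
      · exact fker_continuous.comp (by fun_prop)
    have key : Integrable (fun p : ℝ × ℝ × ℝ =>
        (fker (f * p.1) * fker (-f * p.2.1)) *
        ((h p.2.2 : ℂ) * ψ (p.1 - p.2.2) * starRingEnd ℂ (ψ (p.2.1 - p.2.2)))) :=
      hint.bdd_mul (c := 1) hc.aestronglyMeasurable
        (Filter.Eventually.of_forall fun p => by rw [norm_mul, fker_norm, fker_norm]; norm_num)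
    have : F = fun p : ℝ × ℝ × ℝ =>
        (fker (f * p.1) * fker (-f * p.2.1)) *
        ((h p.2.2 : ℂ) * ψ (p.1 - p.2.2) * starRingEnd ℂ (ψ (p.2.1 - p.2.2))) := by
      funext p; simp only [hFdef]; ring
    rw [this]; exact key
  -- shift lemmas
  have L1 : ∀ u : ℝ, (∫ s, ψ (s - u) * fker (f * s)) = fker (f * u) * Ψ f := by
    intro u
    calc (∫ s, ψ (s - u) * fker (f * s))
        = ∫ s, ψ (s + u - u) * fker (f * (s + u)) :=
          (integral_add_right_eq_self (fun s => ψ (s - u) * fker (f * s)) u).symm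
      _ = ∫ s, fker (f * u) * (ψ s * fker (f * s)) := by
          congr 1; funext s
          rw [add_sub_cancel_right, show f * (s + u) = f * s + f * u by ring, fker_add]
          ring
      _ = fker (f * u) * Ψ f := by rw [integral_const_mul, hΨ]
  have L2 : ∀ u : ℝ, (∫ t, starRingEnd ℂ (ψ (t - u)) * fker (-f * t))
      = fker (-(f * u)) * starRingEnd ℂ (Ψ f) := by
    intro u
    calc (∫ t, starRingEnd ℂ (ψ (t - u)) * fker (-f * t))
        = ∫ t, starRingEnd ℂ (ψ (t - u) * fker (f * t)) := by
          congr 1; funext t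
          rw [map_mul, fker_conj, neg_mul]
      _ = starRingEnd ℂ (∫ t, ψ (t - u) * fker (f * t)) := integral_conj
      _ = fker (-(f * u)) * starRingEnd ℂ (Ψ f) := by
          rw [L1 u, map_mul, fker_conj]
  -- main computation
  calc 𝒦 f (-f)
      = ∫ s, ∫ t, ∫ u, F (s, t, u) := by
        rw [h𝒦]
        simp only [hK, ← integral_mul_const, hFdef]
    _ = ∫ s, ∫ q : ℝ × ℝ, F (s, q) := by
        refine integral_congr_ae ?_
        filter_upwards [hF.prod_right_ae] with s hs
        exact integral_integral hs
    _ = ∫ q : ℝ × ℝ, ∫ s, F (s, q) := integral_integral_swap hF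
    _ = ∫ u, ∫ t, ∫ s, F (s, t, u) := by
        have hJ : Integrable (fun q : ℝ × ℝ => ∫ s, F (s, q)) := hF.integral_prod_right
        have e1 : (∫ (t : ℝ), ∫ (u : ℝ), ∫ s, F (s, t, u)) = ∫ q : ℝ × ℝ, ∫ s, F (s, q) :=
          integral_integral (f := fun t u => ∫ s, F (s, t, u)) hJ
        have e2 : (∫ (t : ℝ), ∫ (u : ℝ), ∫ s, F (s, t, u))
            = ∫ (u : ℝ), ∫ (t : ℝ), ∫ s, F (s, t, u) :=
          integral_integral_swap (f := fun t u => ∫ s, F (s, t, u)) hJ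
        rw [← e1, e2]
    _ = ∫ u, (h u : ℂ) * (Ψ f * starRingEnd ℂ (Ψ f)) := by
        congr 1; funext u
        calc (∫ t, ∫ s, F (s, t, u))
            = ∫ t, ((h u : ℂ) * starRingEnd ℂ (ψ (t - u)) * fker (-f * t)) *
                (fker (f * u) * Ψ f) := by
              congr 1; funext t
              rw [show (fun s => F (s, t, u)) = fun s =>
                  ((h u : ℂ) * starRingEnd ℂ (ψ (t - u)) * fker (-f * t)) *
                  (ψ (s - u) * fker (f * s)) from funext fun s => by
                    simp only [hFdef]; ring]
              rw [integral_const_mul, L1 u]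
          _ = ((h u : ℂ) * (fker (f * u) * Ψ f)) *
                ∫ t, starRingEnd ℂ (ψ (t - u)) * fker (-f * t) := by
              rw [← integral_const_mul]
              congr 1; funext t; ring
          _ = (h u : ℂ) * (Ψ f * starRingEnd ℂ (Ψ f)) := by
              rw [L2 u]
              have : fker (f * u) * fker (-(f * u)) = 1 := by
                rw [← fker_add, add_neg_cancel, fker_zero]
              calc ((h u : ℂ) * (fker (f * u) * Ψ f)) *
                    (fker (-(f * u)) * starRingEnd ℂ (Ψ f))
                  = (fker (f * u) * fker (-(f * u))) *
                      ((h u : ℂ) * (Ψ f * starRingEnd ℂ (Ψ f))) := by ring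
                _ = (h u : ℂ) * (Ψ f * starRingEnd ℂ (Ψ f)) := by rw [this, one_mul]
    _ = (∫ u, (h u : ℂ)) * (Ψ f * starRingEnd ℂ (Ψ f)) := integral_mul_const _ _
    _ = Complex.normSq (Ψ f) := by
        have : (∫ u, (h u : ℂ)) = ((∫ u, h u : ℝ) : ℂ) := integral_ofReal
        rw [this, hh1, Complex.mul_conj]
        norm_num
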